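/- arXiv:2507.22235 — 2 statements merged into one kernel-verified Lean document; each statement's English description precedes it below -/
import Mathlib

section
/- Let G be a space-time network over terminals K in which, for each terminal k, ground arcs connect consecutive ground nodes at k forward in time with zero cost and unbounded capacity. Suppose light travel arcs between terminals k and k' all have identical cost parameters regardless of departure time. Then for any feasible solution using a light travel arc from an arrival-ground node n at k to a ground-departure node m at k' that is not the earliest ground-departure node at k' reachable from n, there exists a feasible solution of no greater cost that instead routes the same flow to the earliest reachable ground-departure node at k' and then forward along ground arcs to m. -/
open Finset in
private lemma exists_path_flow {V A : Type*} [Fintype A] [DecidableEq V] [DecidableEq A]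
    (tail head : A → V) (isGround : A → Prop) [DecidablePred isGround] :
    ∀ {u v : V}, Relation.ReflTransGen
      (fun u v => ∃ l, isGround l ∧ tail l = u ∧ head l = v) u v →
    ∃ d : A → ℕ, (∀ l, ¬ isGround l → d l = 0) ∧
      ∀ n : V, (∑ l ∈ Finset.univ.filter (fun l => tail l = n), (d l : ℤ))
          - ∑ l ∈ Finset.univ.filter (fun l => head l = n), (d l : ℤ)
        = (if u = n then 1 else 0) - (if v = n then 1 else 0) := by
  intro u v h
  induction h using Relation.ReflTransGen.head_induction_on with
  | refl => exact ⟨fun _ => 0, fun _ _ => rfl, fun n => by simp⟩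
  | head h' _ ih =>
    obtain ⟨l0, hl0g, hl0t, hl0h⟩ := h'
    obtain ⟨d, hd0, hdiv⟩ := ih
    refine ⟨fun l => d l + (if l = l0 then 1 else 0), ?_, ?_⟩
    · intro l hl
      show d l + (if l = l0 then 1 else 0) = 0
      rw [hd0 l hl, if_neg]
      rintro rfl; exact hl hl0g
    · intro n
      have hsum : ∀ S : Finset A,
          ∑ l ∈ S, ((d l + (if l = l0 then 1 else 0) : ℕ) : ℤ)
            = (∑ l ∈ S, (d l : ℤ)) + (if l0 ∈ S then 1 else 0) := by
        intro S
        push_cast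
        rw [Finset.sum_add_distrib]
        congr 1
        rw [Finset.sum_ite_eq' S l0 (fun _ => (1 : ℤ))]
      rw [hsum, hsum]
      have h1 := hdiv n
      subst hl0t hl0h
      simp only [Finset.mem_filter, Finset.mem_univ, true_and]
      split_ifs at h1 ⊢ <;> omega

/-- **Earliest-reachability reduction.** In a space-time network where ground arcs
idle locomotives forward in time at zero cost and unbounded capacity, and light
travel arcs between a fixed terminal pair share identical cost parameters
`(e, g)` regardless of departure time, consider a light travel arc `a` from an
arrival-ground node to a ground-departure node `m`, and the light travel arc `a'`
from the same arrival-ground node to the earliest reachable ground-departure node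
`m'` at the same destination terminal, from which `m` can be reached by idling
forward along ground arcs. Then every feasible solution (flow conservation plus
capacity bounds) using `a` can be replaced by a feasible solution of no greater
cost that routes the same flow over `a'` and then forward along ground arcs,
leaving all other non-ground arcs unchanged. -/
theorem earliest_reachability_reduction
    {V A : Type*} [Fintype V] [Fintype A] [DecidableEq V] [DecidableEq A]
    (tail head : A → V) (isGround : A → Prop) [DecidablePred isGround]
    (cap : A → ℕ∞)
    (e g : A → ℚ) (ρ : ℕ) (hρ : 0 < ρ)
    (he : ∀ l, 0 ≤ e l) (hg : ∀ l, 0 ≤ g l)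
    (cost : (A → ℕ) → ℚ)
    (hcost : ∀ x, cost x
      = ∑ l, if isGround l then 0 else e l * ⌈(x l : ℚ) / ρ⌉ + g l * x l)
    (Feasible : (A → ℕ) → Prop)
    (hFeas : ∀ x, Feasible x ↔
      ((∀ n : V, ∑ l ∈ Finset.univ.filter (fun l => head l = n), x l
            = ∑ l ∈ Finset.univ.filter (fun l => tail l = n), x l)
        ∧ ∀ l, (x l : ℕ∞) ≤ cap l))
    (hgroundcap : ∀ l, isGround l → cap l = ⊤)
    (a a' : A) (hne : a ≠ a')
    (hlight : ¬ isGround a) (hlight' : ¬ isGround a')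
    (hsametail : tail a' = tail a)
    (hcap' : cap a' = ⊤)
    (hecost : e a' = e a) (hgcost : g a' = g a)
    (hreach : Relation.ReflTransGen
      (fun u v => ∃ l, isGround l ∧ tail l = u ∧ head l = v) (head a') (head a)) :
    ∀ x, Feasible x →
      ∃ x', Feasible x' ∧ cost x' ≤ cost x ∧
        x' a = 0 ∧ x' a' = x a' + x a ∧
        ∀ l, ¬ isGround l → l ≠ a → l ≠ a' → x' l = x l := by
  intro x hx
  rw [hFeas] at hx
  obtain ⟨hcons, hcap⟩ := hx
  obtain ⟨d, hd0, hdiv⟩ := exists_path_flow tail head isGround hreach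
  have hda : d a = 0 := hd0 a hlight
  have hda' : d a' = 0 := hd0 a' hlight'
  set x' : A → ℕ :=
    fun l => if l = a then 0 else if l = a' then x l + x a else x l + x a * d l
    with hx'def
  have hx'a : x' a = 0 := by simp [hx'def]
  have hx'a' : x' a' = x a' + x a := by simp [hx'def, Ne.symm hne]
  have hx'other : ∀ l, l ≠ a → l ≠ a' → x' l = x l + x a * d l := by
    intro l h1 h2; simp [hx'def, h1, h2]
  -- cast identity
  have hc : ∀ l, (x' l : ℤ) = (x l : ℤ)
      + (x a : ℤ) * (if l = a' then 1 else 0)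
      - (x a : ℤ) * (if l = a then 1 else 0)
      + (x a : ℤ) * (d l : ℤ) := by
    intro l
    by_cases h1 : l = a
    · subst h1
      simp only [hx'a, if_neg hne, if_pos rfl, hda, Nat.cast_zero]
      simp
    · by_cases h2 : l = a'
      · subst h2
        simp only [hx'a', if_pos rfl, if_neg (Ne.symm hne), hda', Nat.cast_zero]
        push_cast; ring
      · rw [hx'other l h1 h2]
        simp only [if_neg h1, if_neg h2]
        push_cast; ring
  have key : ∀ S : Finset A, ∑ l ∈ S, (x' l : ℤ)
      = (∑ l ∈ S, (x l : ℤ))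
        + (x a : ℤ) * (if a' ∈ S then 1 else 0)
        - (x a : ℤ) * (if a ∈ S then 1 else 0)
        + (x a : ℤ) * ∑ l ∈ S, (d l : ℤ) := by
    intro S
    simp only [hc]
    rw [Finset.sum_add_distrib, Finset.sum_sub_distrib, Finset.sum_add_distrib,
      ← Finset.mul_sum, ← Finset.mul_sum, ← Finset.mul_sum,
      Finset.sum_ite_eq' S a' (fun _ => (1 : ℤ)),
      Finset.sum_ite_eq' S a (fun _ => (1 : ℤ))]
  refine ⟨x', ?_, ?_, hx'a, hx'a', fun l hlg h1 h2 => by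
    rw [hx'other l h1 h2, hd0 l hlg, Nat.mul_zero, Nat.add_zero]⟩
  · -- feasibility
    rw [hFeas]
    constructor
    · intro n
      have hZ : (∑ l ∈ Finset.univ.filter (fun l => head l = n), (x' l : ℤ))
          = ∑ l ∈ Finset.univ.filter (fun l => tail l = n), (x' l : ℤ) := by
        rw [key, key]
        have hx0 : (∑ l ∈ Finset.univ.filter (fun l => head l = n), (x l : ℤ))
            = ∑ l ∈ Finset.univ.filter (fun l => tail l = n), (x l : ℤ) := by
          exact_mod_cast congrArg (Nat.cast : ℕ → ℤ) (hcons n)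
        have hD := hdiv n
        simp only [Finset.mem_filter, Finset.mem_univ, true_and, hsametail]
        split_ifs at hD ⊢ <;> linear_combination hx0 - (x a : ℤ) * hD
      exact_mod_cast hZ
    · intro l
      by_cases h1 : l = a
      · subst h1; rw [hx'a]; exact_mod_cast zero_le
      · by_cases h2 : l = a'
        · subst h2; rw [hcap']; exact le_top
        · rw [hx'other l h1 h2]
          by_cases hlg : isGround l
          · rw [hgroundcap l hlg]; exact le_top
          · rw [hd0 l hlg, Nat.mul_zero, Nat.add_zero]; exact hcap l
  · -- cost
    rw [hcost, hcost, ← sub_nonpos, ← Finset.sum_sub_distrib]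
    set h : A → ℚ := fun l =>
      (if isGround l then 0 else e l * ⌈(x' l : ℚ) / ρ⌉ + g l * x' l)
        - (if isGround l then 0 else e l * ⌈(x l : ℚ) / ρ⌉ + g l * x l) with hh
    have hz : ∀ l, l ≠ a → l ≠ a' → h l = 0 := by
      intro l h1 h2
      by_cases hlg : isGround l
      · simp [hh, hlg]
      · have : x' l = x l := by
          rw [hx'other l h1 h2, hd0 l hlg, Nat.mul_zero, Nat.add_zero]
        simp [hh, hlg, this]
    have hsub : ({a, a'} : Finset A) ⊆ Finset.univ := Finset.subset_univ _
    have : ∑ l, h l = ∑ l ∈ ({a, a'} : Finset A), h l := by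
      refine (Finset.sum_subset hsub ?_).symm
      intro l _ hl
      simp only [Finset.mem_insert, Finset.mem_singleton, not_or] at hl
      exact hz l hl.1 hl.2
    rw [this, Finset.sum_pair hne]
    have hceil : (⌈((x a' + x a : ℕ) : ℚ) / ρ⌉ : ℤ)
        ≤ ⌈(x a' : ℚ) / ρ⌉ + ⌈(x a : ℚ) / ρ⌉ := by
      have : ((x a' + x a : ℕ) : ℚ) / ρ = (x a' : ℚ) / ρ + (x a : ℚ) / ρ := by
        push_cast; ring
      rw [this]
      exact Int.ceil_add_le _ _
    have hceilQ : (⌈((x a' : ℚ) + (x a : ℚ)) / ρ⌉ : ℚ)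
        ≤ (⌈(x a' : ℚ) / ρ⌉ : ℚ) + (⌈(x a : ℚ) / ρ⌉ : ℚ) := by
      have := hceil; push_cast at this ⊢; exact_mod_cast this
    have hea := he a
    simp only [hh, if_neg hlight, if_neg hlight', hx'a, hx'a', hecost, hgcost]
    have h0 : ((0 : ℕ) : ℚ) / ρ = 0 := by simp
    rw [h0, Int.ceil_zero]
    push_cast
    linarith [mul_le_mul_of_nonneg_left hceilQ hea]
end

section
/- Under the same setting, if two light travel arcs from the same origin terminal k enter the same ground-departure node m at terminal k', originating from arrival-ground nodes n1 and n2 with time(n1) < time(n2), then any feasible solution using the arc from n1 can be transformed into a feasible solution of no greater cost using the arc from n2, by letting the flow idle on ground arcs at k from n1 to n2 before departing; hence only the arc from the latest such origin node needs to be retained. -/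
open Finset

lemma list_filter_len_cast {A : Type*} [Fintype A] [DecidableEq A]
    (p : A → Prop) [DecidablePred p] (L : List A) :
    ((L.filter (fun l => p l)).length : ℤ)
      = ∑ l ∈ Finset.univ.filter (fun l => p l), (L.count l : ℤ) := by
  induction L with
  | nil => simp
  | cons b L ih =>
    have hcnt : ∀ l, ((b :: L).count l : ℤ) = L.count l + (if l = b then 1 else 0) := by
      intro l
      by_cases h : l = b <;> simp [List.count_cons, h] <;> exact Ne.symm h
    rw [Finset.sum_congr rfl (fun l _ => hcnt l), Finset.sum_add_distrib, ← ih]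
    rw [Finset.sum_ite_eq' (Finset.univ.filter fun l => p l) b (fun _ => (1:ℤ))]
    by_cases hb : p b <;> simp [List.filter_cons, hb]

lemma path_count {V A : Type*} [DecidableEq V]
    (tail head : A → V) (isGround : A → Prop)
    {u v : V}
    (h : Relation.ReflTransGen (fun u v => ∃ l, isGround l ∧ tail l = u ∧ head l = v) u v) :
    ∃ L : List A, (∀ l ∈ L, isGround l) ∧ ∀ n : V,
      ((L.filter (fun l => head l = n)).length : ℤ)
        - ((L.filter (fun l => tail l = n)).length : ℤ)
      = (if n = v then 1 else 0) - (if n = u then 1 else 0) := by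
  induction h with
  | refl => exact ⟨[], by simp, by simp⟩
  | @tail b c hstep harc ih =>
    obtain ⟨L, hgL, hcnt⟩ := ih
    obtain ⟨l0, hl0g, hl0t, hl0h⟩ := harc
    refine ⟨L ++ [l0], ?_, ?_⟩
    · intro l hl
      rcases List.mem_append.mp hl with h | h
      · exact hgL l h
      · simp at h; subst h; exact hl0g
    · intro n
      have key := hcnt n
      subst hl0t; subst hl0h
      have e1 : (((L ++ [l0]).filter (fun l => head l = n)).length : ℤ)
          = ((L.filter (fun l => head l = n)).length : ℤ)
            + (if n = head l0 then 1 else 0) := by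
        by_cases h : n = head l0 <;>
          simp [List.filter_append, List.filter_cons, h, eq_comm]
      have e2 : (((L ++ [l0]).filter (fun l => tail l = n)).length : ℤ)
          = ((L.filter (fun l => tail l = n)).length : ℤ)
            + (if n = tail l0 then 1 else 0) := by
        by_cases h : n = tail l0 <;>
          simp [List.filter_append, List.filter_cons, h, eq_comm]
      rw [e1, e2]
      split_ifs at key ⊢ <;> omega


/-- **Latest-origin filtering.** In the same space-time network setting (ground
arcs idle forward in time at zero cost and unbounded capacity; light travel arcs
between the same terminal pair have identical costs), suppose two light travel
arcs `a1` and `a2` from the same origin terminal enter the same ground-departure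
node `m`, originating from arrival-ground nodes `n1` and `n2` with
`time n1 < time n2`, where `n2` is reachable from `n1` by idling on ground arcs.
Then any feasible solution using `a1` can be transformed into a feasible solution
of no greater cost that lets the flow idle on ground arcs from `n1` to `n2` and
departs on `a2` instead, leaving all other non-ground arcs unchanged; hence only
the arc from the latest such origin node needs to be retained. -/
theorem latest_origin_filtering
    {V A : Type*} [Fintype V] [Fintype A] [DecidableEq V] [DecidableEq A]
    (tail head : A → V) (time : V → ℚ)
    (isGround : A → Prop) [DecidablePred isGround]
    (cap : A → ℕ∞)
    (e g : A → ℚ) (ρ : ℕ) (hρ : 0 < ρ)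
    (he : ∀ l, 0 ≤ e l) (hg : ∀ l, 0 ≤ g l)
    (cost : (A → ℕ) → ℚ)
    (hcost : ∀ x, cost x
      = ∑ l, if isGround l then 0 else e l * ⌈(x l : ℚ) / ρ⌉ + g l * x l)
    (Feasible : (A → ℕ) → Prop)
    (hFeas : ∀ x, Feasible x ↔
      ((∀ n : V, ∑ l ∈ Finset.univ.filter (fun l => head l = n), x l
            = ∑ l ∈ Finset.univ.filter (fun l => tail l = n), x l)
        ∧ ∀ l, (x l : ℕ∞) ≤ cap l))
    (hgroundcap : ∀ l, isGround l → cap l = ⊤)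
    (a1 a2 : A) (hne : a1 ≠ a2)
    (hlight1 : ¬ isGround a1) (hlight2 : ¬ isGround a2)
    (hsamehead : head a2 = head a1)
    (htime : time (tail a1) < time (tail a2))
    (hcap2 : cap a2 = ⊤)
    (hecost : e a2 = e a1) (hgcost : g a2 = g a1)
    (hreach : Relation.ReflTransGen
      (fun u v => ∃ l, isGround l ∧ tail l = u ∧ head l = v) (tail a1) (tail a2)) :
    ∀ x, Feasible x →
      ∃ x', Feasible x' ∧ cost x' ≤ cost x ∧
        x' a1 = 0 ∧ x' a2 = x a2 + x a1 ∧
        ∀ l, ¬ isGround l → l ≠ a1 → l ≠ a2 → x' l = x l := by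
  intro x hx
  obtain ⟨hcons, hcap⟩ := (hFeas x).mp hx
  obtain ⟨L, hgL, hLcnt⟩ := path_count tail head isGround hreach
  set c := x a1 with hc
  -- arcs not in L
  have hnotmem : ∀ l, ¬ isGround l → L.count l = 0 := by
    intro l hl
    exact List.count_eq_zero.mpr (fun hmem => hl (hgL l hmem))
  have hcnt1 : L.count a1 = 0 := hnotmem a1 hlight1
  have hcnt2 : L.count a2 = 0 := hnotmem a2 hlight2
  set x' : A → ℕ := fun l =>
    if l = a1 then 0 else x l + c * L.count l + (if l = a2 then c else 0) with hx'
  have hx'a1 : x' a1 = 0 := by simp [hx']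
  have hx'a2 : x' a2 = x a2 + c := by simp [hx', Ne.symm hne, hcnt2]
  have hx'other : ∀ l, ¬ isGround l → l ≠ a1 → l ≠ a2 → x' l = x l := by
    intro l h1 h2 h3; simp [hx', h2, h3, hnotmem l h1]
  have hx'ground : ∀ l, l ≠ a1 → l ≠ a2 → x' l = x l + c * L.count l := by
    intro l h2 h3; simp [hx', h2, h3]
  -- integer formula for x'
  have hx'cast : ∀ l, (x' l : ℤ) = (x l : ℤ) + c * L.count l
      + (if l = a2 then (c:ℤ) else 0) - (if l = a1 then (c:ℤ) else 0) := by
    intro l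
    by_cases h1 : l = a1
    · subst h1
      simp [hx'a1, hne, hcnt1, hc]
    · by_cases h2 : l = a2
      · subst h2
        simp [hx'a2, Ne.symm hne, hcnt2]
      · rw [hx'ground l h1 h2, if_neg h2, if_neg h1]
        push_cast; ring
  refine ⟨x', ?_, ?_, hx'a1, hx'a2, hx'other⟩
  · -- feasibility
    rw [hFeas]
    constructor
    · intro n
      have hsum : ∀ p : A → Prop, ∀ _ : DecidablePred p,
          (∑ l ∈ Finset.univ.filter (fun l => p l), (x' l : ℤ))
          = (∑ l ∈ Finset.univ.filter (fun l => p l), (x l : ℤ))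
            + c * ((L.filter (fun l => p l)).length : ℤ)
            + (if p a2 then (c:ℤ) else 0) - (if p a1 then (c:ℤ) else 0) := by
        intro p hp
        rw [Finset.sum_congr rfl (fun l _ => hx'cast l)]
        rw [list_filter_len_cast p L, Finset.mul_sum]
        have hi : ∀ a : A, (∑ l ∈ Finset.univ.filter (fun l => p l),
            (if l = a then (c:ℤ) else 0)) = if p a then (c:ℤ) else 0 := by
          intro a
          rw [Finset.sum_ite_eq' (Finset.univ.filter fun l => p l) a (fun _ => (c:ℤ))]
          simp
        have := hi a1; have := hi a2
        simp only [Finset.sum_add_distrib, Finset.sum_sub_distrib, hi a1, hi a2]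
      have h1 := hsum (fun l => head l = n) inferInstance
      have h2 := hsum (fun l => tail l = n) inferInstance
      have hK := hLcnt n
      have hx0 : (∑ l ∈ Finset.univ.filter (fun l => head l = n), (x l : ℤ))
          = ∑ l ∈ Finset.univ.filter (fun l => tail l = n), (x l : ℤ) := by
        exact_mod_cast congrArg (Nat.cast : ℕ → ℤ) (hcons n)
      have goalZ : (∑ l ∈ Finset.univ.filter (fun l => head l = n), (x' l : ℤ))
          = ∑ l ∈ Finset.univ.filter (fun l => tail l = n), (x' l : ℤ) := by
        rw [h1, h2, hx0]
        simp only [hsamehead]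
        have hK' : ((L.filter (fun l => head l = n)).length : ℤ)
            - ((L.filter (fun l => tail l = n)).length : ℤ)
            = (if tail a2 = n then 1 else 0) - (if tail a1 = n then 1 else 0) := by
          rw [hK]
          congr 1
          · by_cases h : tail a2 = n
            · simp [h]
            · simp [h, Ne.symm h]
          · by_cases h : tail a1 = n
            · simp [h]
            · simp [h, Ne.symm h]
        split_ifs at hK' ⊢ <;> linear_combination (c:ℤ) * hK'
      exact_mod_cast goalZ
    · intro l
      by_cases h1 : l = a1
      · subst h1; simp [hx'a1]
      · by_cases h2 : l = a2
        · subst h2; rw [hcap2]; exact le_top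
        · by_cases h3 : isGround l
          · rw [hgroundcap l h3]; exact le_top
          · rw [hx'other l h3 h1 h2]; exact hcap l
  · -- cost
    rw [hcost, hcost]
    set f : A → ℚ := fun l =>
      if isGround l then 0 else e l * ⌈(x' l : ℚ) / ρ⌉ + g l * x' l with hf
    set f' : A → ℚ := fun l =>
      if isGround l then 0 else e l * ⌈(x l : ℚ) / ρ⌉ + g l * x l with hf'
    have hdecomp : ∀ F : A → ℚ, (∑ l, F l)
        = F a1 + (F a2 + ∑ l ∈ (Finset.univ.erase a1).erase a2, F l) := by
      intro F
      rw [Finset.add_sum_erase _ F (Finset.mem_erase.mpr ⟨Ne.symm hne, Finset.mem_univ a2⟩)]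
      rw [Finset.add_sum_erase _ F (Finset.mem_univ a1)]
    rw [hdecomp f, hdecomp f']
    have hrest : (∑ l ∈ (Finset.univ.erase a1).erase a2, f l)
        = ∑ l ∈ (Finset.univ.erase a1).erase a2, f' l := by
      apply Finset.sum_congr rfl
      intro l hl
      have h2 : l ≠ a2 := (Finset.mem_erase.mp hl).1
      have h1 : l ≠ a1 := (Finset.mem_erase.mp (Finset.mem_erase.mp hl).2).1
      by_cases h3 : isGround l
      · simp [hf, hf', h3]
      · simp [hf, hf', h3, hx'other l h3 h1 h2]
    rw [hrest]
    have hfa1 : f a1 = 0 := by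
      simp [hf, hlight1, hx'a1]
    have hf'a1 : 0 ≤ f' a1 := by
      have hceil : (0:ℚ) ≤ ⌈(x a1 : ℚ) / ρ⌉ := by
        have : (0:ℚ) ≤ (x a1 : ℚ) / ρ := by positivity
        exact_mod_cast Int.ceil_nonneg this
      simp only [hf', if_neg hlight1]
      have := he a1; have := hg a1
      positivity
    have hkey : f a2 ≤ f' a1 + f' a2 := by
      simp only [hf, hf', if_neg hlight1, if_neg hlight2, hecost, hgcost, hx'a2]
      have hρQ : (0:ℚ) < (ρ:ℚ) := by exact_mod_cast hρ
      have hsplit : ((x a2 + c : ℕ) : ℚ) / ρ = (x a2 : ℚ)/ρ + (c : ℚ)/ρ := by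
        push_cast; ring
      have hceil : (⌈((x a2 + c : ℕ) : ℚ) / ρ⌉ : ℚ)
          ≤ (⌈(x a1 : ℚ)/ρ⌉ : ℚ) + (⌈(x a2 : ℚ)/ρ⌉ : ℚ) := by
        rw [hsplit]
        have := Int.ceil_add_le ((x a2 : ℚ)/ρ) ((c : ℚ)/ρ)
        have hcast : (⌈(x a2 : ℚ)/ρ + (c : ℚ)/ρ⌉ : ℚ) ≤ (⌈(x a2 : ℚ)/ρ⌉ : ℚ) + (⌈(c : ℚ)/ρ⌉ : ℚ) := by
          exact_mod_cast this
        rw [hc] at hcast ⊢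
        linarith
      have he1 := he a1
      have hmul := mul_le_mul_of_nonneg_left hceil he1
      have hgmul : g a1 * ((x a2 + c : ℕ) : ℚ) = g a1 * (x a1 : ℚ) + g a1 * (x a2 : ℚ) := by
        rw [hc]; push_cast; ring
      rw [hgmul]
      nlinarith [hg a1]
    calc f a1 + (f a2 + ∑ l ∈ (Finset.univ.erase a1).erase a2, f' l)
        = f a2 + ∑ l ∈ (Finset.univ.erase a1).erase a2, f' l := by rw [hfa1]; ring
      _ ≤ (f' a1 + f' a2) + ∑ l ∈ (Finset.univ.erase a1).erase a2, f' l := by linarith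
      _ = f' a1 + (f' a2 + ∑ l ∈ (Finset.univ.erase a1).erase a2, f' l) := by ring
end
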